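/- Under the hypotheses of the abstract eigenvalue lemma (A_k continuous in k, self-adjoint positive definite; B self-adjoint, non-negative, compact), if λ₁ is the first Dirichlet eigenvalue of −Δ on D and A_{√λ₁} − λ₁ B is non-positive on the one-dimensional span of (v₁, 0), where v₁ is the first Dirichlet eigenfunction extended appropriately, while A₀ is positive definite, then the smallest k > 0 with A_k − k²B having non-trivial kernel satisfies k² ≤ λ₁. -/

import Mathlib

open Set

open ContinuousLinearMap
set_option maxHeartbeats 1000000


section AuxCS
variable {X : Type*} [NormedAddCommGroup X] [InnerProductSpace ℂ X] [CompleteSpace X]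

local notation "⟪" x ", " y "⟫" => @inner ℂ _ _ x y

private lemma sa_re_symm {T : X →L[ℂ] X} (hT : IsSelfAdjoint T) (u v : X) :
    (⟪T u, v⟫).re = (⟪T v, u⟫).re := by
  have h : ⟪T v, u⟫ = ⟪v, T u⟫ := by
    conv_lhs => rw [← hT.adjoint_eq]
    exact ContinuousLinearMap.adjoint_inner_left _ _ _
  have h2 : ⟪v, T u⟫ = starRingEnd ℂ ⟪T u, v⟫ := (inner_conj_symm _ _).symm
  rw [h, h2, Complex.conj_re]

private lemma quad_expand {T : X →L[ℂ] X} (hT : IsSelfAdjoint T) (u v : X) (t : ℝ) :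
    (⟪T (u + (t:ℂ) • v), u + (t:ℂ) • v⟫).re
      = (⟪T u, u⟫).re + 2 * t * (⟪T u, v⟫).re + t ^ 2 * (⟪T v, v⟫).re := by
  have e : ⟪T (u + (t:ℂ) • v), u + (t:ℂ) • v⟫
      = ⟪T u, u⟫ + (t:ℂ) * ⟪T u, v⟫ + (t:ℂ) * ⟪T v, u⟫ + (t:ℂ)^2 * ⟪T v, v⟫ := by
    simp only [map_add, map_smul, inner_add_left, inner_add_right, inner_smul_left,
      inner_smul_right, Complex.conj_ofReal]
    ring
  have h := sa_re_symm hT v u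
  rw [e]
  simp only [Complex.add_re, Complex.mul_re, Complex.ofReal_re, Complex.ofReal_im,
    ← Complex.ofReal_pow]
  rw [h]
  ring

private lemma gen_cs {T : X →L[ℂ] X} (hT : IsSelfAdjoint T) (hpos : ∀ x : X, 0 ≤ (⟪T x, x⟫).re)
    (u v : X) : (⟪T u, v⟫).re ^ 2 ≤ (⟪T u, u⟫).re * (⟪T v, v⟫).re := by
  have key : ∀ t : ℝ, 0 ≤ (⟪T v, v⟫).re * (t * t) + (2 * (⟪T u, v⟫).re) * t + (⟪T u, u⟫).re := by
    intro t
    have h := hpos (u + (t:ℂ) • v)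
    rw [quad_expand hT] at h
    nlinarith [h]
  have hd := discrim_le_zero key
  have hd' : (2 * (⟪T u, v⟫).re) ^ 2 - 4 * (⟪T v, v⟫).re * (⟪T u, u⟫).re ≤ 0 := by
    simpa [discrim] using hd
  nlinarith [hd']

private lemma norm_sq_le_opnorm_mul {T : X →L[ℂ] X} (hT : IsSelfAdjoint T)
    (hpos : ∀ x : X, 0 ≤ (⟪T x, x⟫).re) (x : X) :
    ‖T x‖ ^ 2 ≤ ‖T‖ * (⟪T x, x⟫).re := by
  rcases eq_or_ne (T x) 0 with h0 | h0
  · rw [h0, norm_zero]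
    simpa using mul_nonneg (norm_nonneg T) (hpos x)
  · have h1 := gen_cs hT hpos x (T x)
    have h2 : (⟪T x, T x⟫).re = ‖T x‖ ^ 2 := by
      simpa using inner_self_eq_norm_sq (𝕜 := ℂ) (T x)
    have h3 : (⟪T (T x), T x⟫).re ≤ ‖T‖ * ‖T x‖ * ‖T x‖ := by
      calc (⟪T (T x), T x⟫).re ≤ ‖(⟪T (T x), T x⟫ : ℂ)‖ := Complex.re_le_norm _
        _ ≤ ‖T (T x)‖ * ‖T x‖ := norm_inner_le_norm _ _
        _ ≤ ‖T‖ * ‖T x‖ * ‖T x‖ := by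
            have := T.le_opNorm (T x)
            nlinarith [norm_nonneg (T x), norm_nonneg (T (T x))]
    have hn : (0:ℝ) < ‖T x‖ := norm_pos_iff.mpr h0
    have hq := hpos x
    rw [h2] at h1
    have h4 : (⟪T x, x⟫).re * (⟪T (T x), T x⟫).re ≤ (⟪T x, x⟫).re * (‖T‖ * ‖T x‖ * ‖T x‖) :=
      mul_le_mul_of_nonneg_left h3 hq
    nlinarith [h1, h4, hn, mul_pos hn hn]

private lemma qform_eq (C Bb : X →L[ℂ] X) (c : ℝ) (x : X) :
    (⟪(C - (c:ℂ) • Bb) x, x⟫).re = (⟪C x, x⟫).re - c * (⟪Bb x, x⟫).re := by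
  have h : (C - (c:ℂ) • Bb) x = C x - (c:ℂ) • Bb x := rfl
  rw [h, inner_sub_left, inner_smul_left, Complex.conj_ofReal, Complex.sub_re,
    Complex.re_ofReal_mul]

end AuxCS
section Main
open Filter Topology Metric
variable {X : Type*} [NormedAddCommGroup X] [InnerProductSpace ℂ X] [CompleteSpace X]

local notation "⟪" x ", " y "⟫" => @inner ℂ _ _ x y

private lemma habs_form (C : X →L[ℂ] X) (x : X) (hx : ‖x‖ = 1) : |(⟪C x, x⟫).re| ≤ ‖C‖ := by
  calc |(⟪C x, x⟫).re| ≤ ‖(⟪C x, x⟫ : ℂ)‖ := by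
        exact Complex.abs_re_le_norm _
    _ ≤ ‖C x‖ * ‖x‖ := norm_inner_le_norm _ _
    _ ≤ (‖C‖ * ‖x‖) * ‖x‖ := mul_le_mul_of_nonneg_right (C.le_opNorm x) (norm_nonneg x)
    _ = ‖C‖ := by rw [hx]; ring

private lemma exists_eigen
    (A : ℝ → X →L[ℂ] X) (B : X →L[ℂ] X) (s : ℝ) (hs : 0 < s)
    (hAcont : ContinuousOn A (Set.Ici (0 : ℝ)))
    (hAsa : ∀ k ≥ (0 : ℝ), IsSelfAdjoint (A k))
    (hApos : ∀ k ≥ (0 : ℝ), ∃ c > (0 : ℝ), ∀ x : X, c * ‖x‖ ^ 2 ≤ (⟪A k x, x⟫).re)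
    (hBsa : IsSelfAdjoint B)
    (hBcompact : IsCompactOperator B)
    (u₀ : X) (hu₀ : ‖u₀‖ = 1)
    (hqs : (⟪A s u₀, u₀⟫).re - s ^ 2 * (⟪B u₀, u₀⟫).re ≤ 0)
    (h1 : ∃ c > (0 : ℝ), ∀ x : X, c * ‖x‖ ^ 2 ≤ (⟪A 0 x, x⟫).re) :
    ∃ k ∈ Set.Ioc (0 : ℝ) s, ∃ x : X, x ≠ 0 ∧ (A k - ((k : ℂ) ^ 2) • B) x = 0 := by
  classical
  set Sph : Set X := {x : X | ‖x‖ = 1} with hSph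
  have hSne : Sph.Nonempty := ⟨u₀, hu₀⟩
  set q : ℝ → X → ℝ := fun k x => (⟪A k x, x⟫).re - k ^ 2 * (⟪B x, x⟫).re with hq
  set m : ℝ → ℝ := fun k => sInf (q k '' Sph) with hmdef
  have hbdd : ∀ k : ℝ, BddBelow (q k '' Sph) := by
    intro k
    refine ⟨-(‖A k‖ + k ^ 2 * ‖B‖), ?_⟩
    rintro y ⟨x, hx, rfl⟩
    have hx1 : ‖x‖ = 1 := hx
    have h1 := abs_le.mp (habs_form (A k) x hx1)
    have h2 := abs_le.mp (habs_form B x hx1)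
    simp only [hq]
    nlinarith [sq_nonneg k, h1.1, h1.2, h2.1, h2.2]
  have hmle : ∀ k, ∀ x ∈ Sph, m k ≤ q k x := fun k x hx => csInf_le (hbdd k) ⟨x, hx, rfl⟩
  have hmge : ∀ (k : ℝ) (c : ℝ), (∀ x ∈ Sph, c ≤ q k x) → c ≤ m k := by
    intro k c h
    refine le_csInf (hSne.image _) ?_
    rintro y ⟨x, hx, rfl⟩
    exact h x hx
  obtain ⟨c₀, hc₀, hc₀le⟩ := h1
  have hm0 : 0 < m 0 := by
    refine lt_of_lt_of_le hc₀ (hmge 0 c₀ ?_)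
    intro x hx
    have h := hc₀le x
    have hx1 : ‖x‖ = 1 := hx
    rw [hx1] at h
    simp only [hq]
    nlinarith [h]
  have hqsu : q s u₀ ≤ 0 := by simp only [hq]; exact hqs
  have hms : m s ≤ 0 := le_trans (hmle s u₀ hu₀) hqsu
  have hqdiff : ∀ k k' : ℝ, ∀ x ∈ Sph,
      |q k x - q k' x| ≤ ‖A k - A k'‖ + |k ^ 2 - k' ^ 2| * ‖B‖ := by
    intro k k' x hx
    have hx1 : ‖x‖ = 1 := hx
    have e : q k x - q k' x = (⟪(A k - A k') x, x⟫).re - (k ^ 2 - k' ^ 2) * (⟪B x, x⟫).re := by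
      simp only [hq]
      have h : (A k - A k') x = A k x - A k' x := rfl
      rw [h, inner_sub_left, Complex.sub_re]
      ring
    rw [e]
    have h1 := abs_le.mp (habs_form (A k - A k') x hx1)
    have h2 := abs_le.mp (habs_form B x hx1)
    have h2' : |(k ^ 2 - k' ^ 2) * (⟪B x, x⟫).re| ≤ |k ^ 2 - k' ^ 2| * ‖B‖ := by
      rw [abs_mul]
      exact mul_le_mul_of_nonneg_left (abs_le.mpr h2) (abs_nonneg _)
    have h2'' := abs_le.mp h2'
    rw [abs_sub_le_iff]
    constructor <;> nlinarith [h1.1, h1.2, h2''.1, h2''.2]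
  have hmdiff : ∀ k k' : ℝ, m k - m k' ≤ ‖A k - A k'‖ + |k ^ 2 - k' ^ 2| * ‖B‖ := by
    intro k k'
    have hstep : ∀ x ∈ Sph, m k - (‖A k - A k'‖ + |k ^ 2 - k' ^ 2| * ‖B‖) ≤ q k' x := by
      intro x hx
      have h1 := hmle k x hx
      have h2 := (abs_le.mp (hqdiff k k' x hx)).2
      linarith
    have := hmge k' _ hstep
    linarith
  have hmcont : ContinuousOn m (Set.Icc 0 s) := by
    rw [Metric.continuousOn_iff]
    intro a ha ε hε
    have ha0 : a ∈ Set.Ici (0:ℝ) := ha.1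
    obtain ⟨δ₁, hδ₁, hA⟩ := (Metric.continuousOn_iff.mp hAcont) a ha0 (ε/2) (by linarith)
    have hcont2 : Continuous fun k : ℝ => |k ^ 2 - a ^ 2| * ‖B‖ :=
      (((continuous_pow 2).sub continuous_const).abs).mul continuous_const
    have h20 : Filter.Tendsto (fun k : ℝ => |k ^ 2 - a ^ 2| * ‖B‖) (𝓝 a) (𝓝 0) := by
      have he : |a ^ 2 - a ^ 2| * ‖B‖ = 0 := by simp
      simpa [he] using hcont2.tendsto a
    obtain ⟨δ₂, hδ₂, h2⟩ := Metric.eventually_nhds_iff.mp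
      (Metric.tendsto_nhds.mp h20 (ε/2) (by linarith))
    refine ⟨min δ₁ δ₂, lt_min hδ₁ hδ₂, ?_⟩
    intro b hb hab
    have hb0 : b ∈ Set.Ici (0:ℝ) := hb.1
    have hd1 : dist (A b) (A a) < ε/2 := hA b hb0 (lt_of_lt_of_le hab (min_le_left _ _))
    have hd2 : |b ^ 2 - a ^ 2| * ‖B‖ < ε/2 := by
      have h2' := h2 (lt_of_lt_of_le hab (min_le_right _ _))
      have he : dist (|b ^ 2 - a ^ 2| * ‖B‖) 0 = |b ^ 2 - a ^ 2| * ‖B‖ := by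
        rw [Real.dist_0_eq_abs]
        exact abs_of_nonneg (mul_nonneg (abs_nonneg _) (norm_nonneg _))
      rwa [he] at h2'
    have hub : m b - m a ≤ ‖A b - A a‖ + |b^2 - a^2| * ‖B‖ := hmdiff b a
    have hlb : m a - m b ≤ ‖A a - A b‖ + |a^2 - b^2| * ‖B‖ := hmdiff a b
    have hn : ‖A a - A b‖ = ‖A b - A a‖ := norm_sub_rev _ _
    have habs2 : |a^2 - b^2| = |b^2 - a^2| := abs_sub_comm _ _
    have hde : ‖A b - A a‖ = dist (A b) (A a) := (dist_eq_norm _ _).symm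
    have habs2m : |a^2 - b^2| * ‖B‖ = |b^2 - a^2| * ‖B‖ := by rw [habs2]
    rw [Real.dist_eq, abs_lt]
    constructor <;> linarith [hd1, hd2, hub, hlb, hde, hn, habs2m]
  have h0s : (0:ℝ) ≤ s := hs.le
  have h0mem : (0:ℝ) ∈ Set.Icc (m s) (m 0) := ⟨hms, hm0.le⟩
  obtain ⟨k, hk, hmk⟩ := intermediate_value_Icc' h0s hmcont h0mem
  have hkpos : 0 < k := by
    rcases lt_or_eq_of_le hk.1 with h | h
    · exact h
    · exfalso; rw [← h] at hmk; linarith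
  set T := A k - ((k:ℂ) ^ 2) • B with hT
  have hksq : ((k:ℂ)^2) = (((k^2 : ℝ)):ℂ) := by push_cast; ring
  have hscalar : IsSelfAdjoint ((k:ℂ)^2) := by
    rw [IsSelfAdjoint, star_pow, Complex.star_def, Complex.conj_ofReal]
  have hTsa : IsSelfAdjoint T := by
    rw [hT]
    exact (hAsa k hkpos.le).sub (hscalar.smul hBsa)
  have hTq : ∀ x : X, (⟪T x, x⟫).re = q k x := by
    intro x
    rw [hT, hksq, qform_eq (A k) B (k^2) x]
  have hTpos : ∀ x : X, 0 ≤ (⟪T x, x⟫).re := by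
    intro x
    rcases eq_or_ne x 0 with rfl | hx0
    · simp
    · have hnx : (0:ℝ) < ‖x‖ := norm_pos_iff.mpr hx0
      set u : X := ((‖x‖⁻¹ : ℝ) : ℂ) • x with hu
      have hun : u ∈ Sph := by
        show ‖u‖ = 1
        rw [hu, norm_smul, Complex.norm_real, Real.norm_eq_abs, abs_of_pos (inv_pos.mpr hnx),
          inv_mul_cancel₀ hnx.ne']
      have h0 : 0 ≤ q k u := by
        rw [← hmk]; exact hmle k u hun
      have hrel : (⟪T u, u⟫).re = (‖x‖⁻¹ * ‖x‖⁻¹) * (⟪T x, x⟫).re := by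
        rw [hu]
        have hsm : T (((‖x‖⁻¹:ℝ):ℂ) • x) = ((‖x‖⁻¹:ℝ):ℂ) • T x := map_smul T _ x
        rw [hsm, inner_smul_left, inner_smul_right, Complex.conj_ofReal, ← mul_assoc,
          ← Complex.ofReal_mul, Complex.re_ofReal_mul]
      have h0' : 0 ≤ (⟪T u, u⟫).re := by rw [hTq u]; exact h0
      rw [hrel] at h0'
      nlinarith [h0', mul_pos (inv_pos.mpr hnx) (inv_pos.mpr hnx)]
  have hseq : ∀ n : ℕ, ∃ x, x ∈ Sph ∧ q k x < 1 / (n + 1) := by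
    intro n
    have hlt : m k < 1 / (n + 1) := by rw [hmk]; positivity
    obtain ⟨y, ⟨x, hx, rfl⟩, hy⟩ := exists_lt_of_csInf_lt (hSne.image _) hlt
    exact ⟨x, hx, hy⟩
  choose u hu hule using hseq
  have hTu0 : Filter.Tendsto (fun n => T (u n)) Filter.atTop (𝓝 0) := by
    rw [tendsto_zero_iff_norm_tendsto_zero]
    have hb : ∀ n : ℕ, ‖T (u n)‖ ≤ Real.sqrt (‖T‖ * (1 / (n + 1))) := by
      intro n
      have h1 := norm_sq_le_opnorm_mul hTsa hTpos (u n)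
      have h2 : (⟪T (u n), u n⟫).re ≤ 1 / (n + 1) := by rw [hTq]; exact (hule n).le
      have h3 : ‖T (u n)‖ ^ 2 ≤ ‖T‖ * (1 / (n + 1)) :=
        le_trans h1 (mul_le_mul_of_nonneg_left h2 (norm_nonneg _))
      exact (Real.le_sqrt (norm_nonneg _) (by positivity)).mpr h3
    have hlim : Filter.Tendsto (fun n : ℕ => Real.sqrt (‖T‖ * (1 / (n + 1))))
        Filter.atTop (𝓝 0) := by
      have h4 : Filter.Tendsto (fun n : ℕ => ‖T‖ * (1 / ((n:ℝ) + 1))) Filter.atTop (𝓝 0) := by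
        simpa using (tendsto_one_div_add_atTop_nhds_zero_nat).const_mul ‖T‖
      have h5 := (Real.continuous_sqrt.tendsto 0).comp h4
      simpa only [Function.comp_def, Real.sqrt_zero] using h5
    exact squeeze_zero (fun n => norm_nonneg _) hb hlim
  obtain ⟨K, hK, hKmem⟩ := hBcompact
  obtain ⟨ε₀, hε₀, hball⟩ := Metric.mem_nhds_iff.mp hKmem
  set cc : ℂ := ((ε₀ / 2 : ℝ) : ℂ) with hcc
  have hccne : cc ≠ 0 := by
    rw [hcc, ne_eq, Complex.ofReal_eq_zero]
    intro h; linarith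
  have hmemK' : ∀ n, cc • B (u n) ∈ K := by
    intro n
    have hun : ‖u n‖ = 1 := hu n
    have hmem : cc • u n ∈ Metric.ball (0:X) ε₀ := by
      rw [mem_ball_zero_iff, norm_smul, hun, mul_one, hcc, Complex.norm_real,
        Real.norm_eq_abs, abs_of_pos (by linarith : (0:ℝ) < ε₀/2)]
      linarith
    have hmem2 := hball hmem
    rwa [Set.mem_preimage, map_smul] at hmem2
  obtain ⟨y, hyK, φ, hφ, hconvB⟩ := hK.tendsto_subseq hmemK'
  have hBconv : Filter.Tendsto (fun j => B (u (φ j))) Filter.atTop (𝓝 (cc⁻¹ • y)) := by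
    have h := hconvB.const_smul cc⁻¹
    have he : ∀ j, cc⁻¹ • (cc • B (u (φ j))) = B (u (φ j)) := by
      intro j; rw [smul_smul, inv_mul_cancel₀ hccne, one_smul]
    simp only [Function.comp] at h
    simpa [he] using h
  have hAconv : Filter.Tendsto (fun j => A k (u (φ j))) Filter.atTop
      (𝓝 (((k:ℂ)^2) • (cc⁻¹ • y))) := by
    have he : ∀ j, A k (u (φ j)) = T (u (φ j)) + ((k:ℂ)^2) • B (u (φ j)) := by
      intro j
      rw [hT]
      simp [ContinuousLinearMap.sub_apply, ContinuousLinearMap.smul_apply]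
    simp only [he]
    have hc1 : Filter.Tendsto (fun j => T (u (φ j))) Filter.atTop (𝓝 0) :=
      hTu0.comp hφ.tendsto_atTop
    have hc2 := hBconv.const_smul ((k:ℂ)^2)
    simpa using hc1.add hc2
  obtain ⟨c, hc, hcle⟩ := hApos k hkpos.le
  have hlow : ∀ x : X, c * ‖x‖ ≤ ‖A k x‖ := by
    intro x
    rcases eq_or_ne x 0 with rfl | hx0
    · simp
    · have hnx : (0:ℝ) < ‖x‖ := norm_pos_iff.mpr hx0
      have hc1 := hcle x
      have hc2 : (⟪A k x, x⟫).re ≤ ‖A k x‖ * ‖x‖ := by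
        calc (⟪A k x, x⟫).re ≤ ‖(⟪A k x, x⟫ : ℂ)‖ := by
              exact Complex.re_le_norm _
          _ ≤ ‖A k x‖ * ‖x‖ := norm_inner_le_norm _ _
      nlinarith [hc1, hc2, hnx]
  have hCauchyA : CauchySeq (fun j => A k (u (φ j))) := hAconv.cauchySeq
  have hCauchy : CauchySeq (fun j => u (φ j)) := by
    rw [Metric.cauchySeq_iff]
    intro ε hε
    obtain ⟨N, hN⟩ := Metric.cauchySeq_iff.mp hCauchyA (c * ε) (by positivity)
    refine ⟨N, fun i hi j hj => ?_⟩
    have hh1 := hN i hi j hj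
    have hh2 := hlow (u (φ i) - u (φ j))
    rw [map_sub] at hh2
    rw [dist_eq_norm] at hh1 ⊢
    nlinarith [hh1, hh2, hc]
  obtain ⟨x, hxlim⟩ := cauchySeq_tendsto_of_complete hCauchy
  have hxnorm : ‖x‖ = 1 := by
    have hh1 : Filter.Tendsto (fun j => ‖u (φ j)‖) Filter.atTop (𝓝 ‖x‖) := hxlim.norm
    have hh2 : (fun j => ‖u (φ j)‖) = fun _ => (1:ℝ) := funext fun j => hu (φ j)
    rw [hh2] at hh1
    exact tendsto_nhds_unique hh1 tendsto_const_nhds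
  have hTx : T x = 0 := by
    have hh1 : Filter.Tendsto (fun j => T (u (φ j))) Filter.atTop (𝓝 (T x)) :=
      (T.continuous.tendsto x).comp hxlim
    have hh2 : Filter.Tendsto (fun j => T (u (φ j))) Filter.atTop (𝓝 0) :=
      hTu0.comp hφ.tendsto_atTop
    exact tendsto_nhds_unique hh1 hh2
  refine ⟨k, ⟨hkpos, hk.2⟩, x, ?_, hTx⟩
  intro h
  rw [h, norm_zero] at hxnorm
  exact one_ne_zero hxnorm.symm
end Main


/-- Under the hypotheses of the abstract eigenvalue lemma (continuity in `k`,
self-adjointness, positive definiteness of `A_k`; `B` self-adjoint non-negative compact),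
if `A₀` is positive definite and `A_{√λ₁} − λ₁ B` is non-positive on the one-dimensional
span of a nonzero element `x₀` (built from the first Dirichlet eigenfunction of `−Δ` on `D`
with first Dirichlet eigenvalue `λ₁`), then there is an eigenvalue `k ∈ (0, √λ₁]`, and the
smallest `k > 0` for which `A_k − k²B` has non-trivial kernel satisfies `k² ≤ λ₁`. -/
theorem first_eigenvalue_upper_bound
    {X : Type*} [NormedAddCommGroup X] [InnerProductSpace ℂ X] [CompleteSpace X]
    (A : ℝ → X →L[ℂ] X) (B : X →L[ℂ] X)
    (hAcont : ContinuousOn A (Ici (0 : ℝ)))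
    (hAsa : ∀ k ≥ (0 : ℝ), IsSelfAdjoint (A k))
    (hApos : ∀ k ≥ (0 : ℝ), ∃ c > (0 : ℝ), ∀ x : X, c * ‖x‖ ^ 2 ≤ (inner ℂ (A k x) x : ℂ).re)
    (hBsa : IsSelfAdjoint B)
    (hBnonneg : ∀ x : X, 0 ≤ (inner ℂ (B x) x : ℂ).re)
    (hBcompact : IsCompactOperator B)
    (lam1 : ℝ) (hlam1 : 0 < lam1)
    (x₀ : X) (hx₀ : x₀ ≠ 0)
    (h2 : ∀ x ∈ Submodule.span ℂ ({x₀} : Set X),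
      (inner ℂ ((A (Real.sqrt lam1) - (lam1 : ℂ) • B) x) x : ℂ).re ≤ 0)
    (h1 : ∃ c > (0 : ℝ), ∀ x : X, c * ‖x‖ ^ 2 ≤ (inner ℂ (A 0 x) x : ℂ).re) :
    (∃ k ∈ Ioc (0 : ℝ) (Real.sqrt lam1),
      ∃ x : X, x ≠ 0 ∧ (A k - ((k : ℂ) ^ 2) • B) x = 0)
    ∧ ∀ k₁ : ℝ,
        IsLeast {k : ℝ | 0 < k ∧ ∃ x : X, x ≠ 0 ∧ (A k - ((k : ℂ) ^ 2) • B) x = 0} k₁ →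
        k₁ ^ 2 ≤ lam1 := by
  have hs : 0 < Real.sqrt lam1 := Real.sqrt_pos.mpr hlam1
  have hnx : 0 < ‖x₀‖ := norm_pos_iff.mpr hx₀
  set u₀ : X := ((‖x₀‖⁻¹ : ℝ) : ℂ) • x₀ with hu₀def
  have hu₀ : ‖u₀‖ = 1 := by
    rw [hu₀def, norm_smul, Complex.norm_real, Real.norm_eq_abs,
      abs_of_pos (inv_pos.mpr hnx), inv_mul_cancel₀ hnx.ne']
  have hu₀mem : u₀ ∈ Submodule.span ℂ ({x₀} : Set X) :=
    Submodule.smul_mem _ _ (Submodule.mem_span_singleton_self x₀)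
  have hqs : (inner ℂ (A (Real.sqrt lam1) u₀) u₀ : ℂ).re
      - (Real.sqrt lam1) ^ 2 * (inner ℂ (B u₀) u₀ : ℂ).re ≤ 0 := by
    have h := h2 u₀ hu₀mem
    have he := qform_eq (A (Real.sqrt lam1)) B lam1 u₀
    rw [he] at h
    rw [Real.sq_sqrt hlam1.le]
    exact h
  have hexists := exists_eigen A B (Real.sqrt lam1) hs hAcont hAsa hApos hBsa hBcompact
    u₀ hu₀ hqs h1
  refine ⟨hexists, ?_⟩
  intro k₁ hleast
  obtain ⟨k, hk, x, hxne, hxeq⟩ := hexists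
  have hmem : k ∈ {k : ℝ | 0 < k ∧ ∃ x : X, x ≠ 0 ∧ (A k - ((k : ℂ) ^ 2) • B) x = 0} :=
    ⟨hk.1, x, hxne, hxeq⟩
  have h1k : k₁ ≤ k := hleast.2 hmem
  have h0k : 0 < k₁ := hleast.1.1
  have hks : k₁ ≤ Real.sqrt lam1 := le_trans h1k hk.2
  calc k₁ ^ 2 ≤ (Real.sqrt lam1) ^ 2 := pow_le_pow_left₀ h0k.le hks 2
    _ = lam1 := Real.sq_sqrt hlam1.le
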